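/- The set D_n = {A(a) : a ∈ W^n} of twisted-circulant matrices is a subring of the n×n matrix ring over W: it contains the identity matrix (which is A(1, 0, …, 0)), is closed under addition and negation (A(a) + A(b) = A(a + b)), and is closed under matrix multiplication (for all a, b ∈ W^n there exists c ∈ W^n with A(a)·A(b) = A(c)). -/

import Mathlib

/-- The Frobenius automorphism `σ` of `W = W(K)`, induced by functoriality of Witt vectors
from the Frobenius automorphism `x ↦ x^p` of the finite field `K`. -/
noncomputable def wittFrob (p : ℕ) [Fact p.Prime]
    (K : Type) [Field K] [Fintype K] [CharP K p] : RingAut (WittVector p K) :=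
  RingEquiv.ofRingHom (WittVector.map ((frobeniusEquiv K p : K ≃+* K) : K →+* K))
    (WittVector.map (((frobeniusEquiv K p).symm : K ≃+* K) : K →+* K))
    (by
      apply RingHom.ext
      intro x
      apply WittVector.ext
      intro k
      simp [WittVector.map_coeff])
    (by
      apply RingHom.ext
      intro x
      apply WittVector.ext
      intro k
      simp [WittVector.map_coeff])

section lems
variable (p : ℕ) [Fact p.Prime] (K : Type) [Field K] [Fintype K] [CharP K p]

lemma wittFrob_coeff (x : WittVector p K) (k : ℕ) :
    (wittFrob p K x).coeff k = (x.coeff k) ^ p := by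
  show ((WittVector.map ((frobeniusEquiv K p : K ≃+* K) : K →+* K)) x).coeff k = _
  rw [WittVector.map_coeff]
  rfl

lemma wittFrob_pow_coeff (m : ℕ) (x : WittVector p K) (k : ℕ) :
    ((wittFrob p K ^ m) x).coeff k = (x.coeff k) ^ p ^ m := by
  induction m with
  | zero => simp
  | succ m ih =>
      have : (wittFrob p K ^ (m+1)) x = wittFrob p K ((wittFrob p K ^ m) x) := by
        rw [pow_succ']; rfl
      rw [this, wittFrob_coeff, ih, ← pow_mul, ← pow_succ]

lemma wittFrob_pow_card (n : ℕ) (hK : Fintype.card K = p ^ n) :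
    wittFrob p K ^ n = 1 := by
  apply RingEquiv.ext
  intro x
  apply WittVector.ext
  intro k
  rw [wittFrob_pow_coeff, ← hK, FiniteField.pow_card]
  rfl
end lems

section lems2
variable {G : Type} [Group G]

lemma zpow_congr_of_pow_eq_one {σ : G} {n : ℕ} (hσ : σ ^ n = 1) {s t : ℤ}
    (h : (n:ℤ) ∣ s - t) : σ ^ s = σ ^ t := by
  obtain ⟨d, hd⟩ := h
  have hs : s = t + n * d := by linarith
  rw [hs, zpow_add, zpow_mul, zpow_natCast, hσ, one_zpow, mul_one]
end lems2

section lems3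
variable (p : ℕ) [Fact p.Prime] (K : Type) [Field K] [Fintype K] [CharP K p]
variable (n : ℕ) [NeZero n]

lemma fin_sub_val (i k : Fin n) :
    (((i - k) : Fin n) : ℕ) =
      if (k:ℕ) ≤ (i:ℕ) then (i:ℕ) - (k:ℕ) else (i:ℕ) + n - (k:ℕ) := by
  have hk := k.isLt; have hi := i.isLt
  rw [Fin.sub_def]
  rcases le_or_gt (k:ℕ) (i:ℕ) with h | h
  · rw [if_pos h]
    show (n - (k:ℕ) + i) % n = _
    have he : n - (k:ℕ) + i = ((i:ℕ) - k) + n := by omega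
    rw [he, Nat.add_mod_right, Nat.mod_eq_of_lt (by omega)]
  · rw [if_neg (not_le.mpr h)]
    show (n - (k:ℕ) + i) % n = _
    rw [Nat.mod_eq_of_lt (by omega)]
    omega

lemma frob_comp (hfrob : wittFrob p K ^ n = 1) (i k : Fin n) (x : WittVector p K) :
    ((wittFrob p K)⁻¹ ^ (i:ℕ)) ((wittFrob p K ^ (((i - k) : Fin n):ℕ)) x)
      = ((wittFrob p K)⁻¹ ^ (k:ℕ)) x := by
  set σ := wittFrob p K with hσ
  set m : ℕ := (((i - k) : Fin n):ℕ) with hm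
  have h1 : σ⁻¹ ^ (i:ℕ) * σ ^ m = σ⁻¹ ^ (k:ℕ) := by
    have hup : σ⁻¹ ^ (i:ℕ) * σ ^ m = σ ^ ((m:ℤ) - (i:ℕ)) := by
      rw [inv_pow, ← zpow_natCast σ (i:ℕ), ← zpow_neg, ← zpow_natCast σ m, ← zpow_add,
        sub_eq_neg_add]
    have hdn : σ⁻¹ ^ (k:ℕ) = σ ^ (-(k:ℤ)) := by
      rw [inv_pow, ← zpow_natCast σ (k:ℕ), ← zpow_neg]
    rw [hup, hdn]
    apply zpow_congr_of_pow_eq_one hfrob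
    have hq := Nat.div_add_mod (n - (k:ℕ) + i) n
    have hmv : m = (n - (k:ℕ) + i) % n := by rw [hm, Fin.sub_def]
    have hk := k.isLt; have hi := i.isLt
    refine ⟨1 - ((n - (k:ℕ) + i) / n : ℕ), ?_⟩
    have : (m:ℤ) = (n:ℤ) - k + i - n * ((n - (k:ℕ) + i) / n : ℕ) := by
      omega
    rw [this]; ring
  calc ((σ)⁻¹ ^ (i:ℕ)) ((σ ^ m) x) = (σ⁻¹ ^ (i:ℕ) * σ ^ m) x := rfl
    _ = (σ⁻¹ ^ (k:ℕ)) x := by rw [h1]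

lemma coeff_id (i j k : Fin n) :
    (if (k:ℕ) ≤ (i:ℕ) then (1 : WittVector p K) else (p : WittVector p K)) *
      (if (j:ℕ) ≤ (k:ℕ) then 1 else (p : WittVector p K))
    = (if (j:ℕ) ≤ (i:ℕ) then 1 else (p : WittVector p K)) *
      (if (((i - k) : Fin n):ℕ) ≤ (((i - j) : Fin n):ℕ) then 1
        else (p : WittVector p K)) := by
  have hk := k.isLt; have hi := i.isLt; have hj := j.isLt
  rw [fin_sub_val, fin_sub_val]
  split_ifs <;> first | ring1 | (exfalso; omega)
end lems3

noncomputable def twc (p : ℕ) [Fact p.Prime]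
    (K : Type) [Field K] [Fintype K] [CharP K p] (n : ℕ)
    (a : Fin n → WittVector p K) : Matrix (Fin n) (Fin n) (WittVector p K) :=
  Matrix.of fun i j =>
    if (j : ℕ) ≤ (i : ℕ) then ((wittFrob p K)⁻¹ ^ (i : ℕ)) (a (i - j))
    else (p : WittVector p K) * (((wittFrob p K)⁻¹ ^ (i : ℕ)) (a (i - j)))

lemma twc_apply (p : ℕ) [Fact p.Prime]
    (K : Type) [Field K] [Fintype K] [CharP K p] (n : ℕ)
    (a : Fin n → WittVector p K) (i j : Fin n) :
    twc p K n a i j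
      = (if (j : ℕ) ≤ (i : ℕ) then 1 else (p : WittVector p K)) *
        ((wittFrob p K)⁻¹ ^ (i : ℕ)) (a (i - j)) := by
  show (if (j : ℕ) ≤ (i : ℕ) then _ else _) = _
  split_ifs with h
  · rw [one_mul]
  · rfl

theorem twc_subring
    (p n : ℕ) [Fact p.Prime] (hn : 1 ≤ n)
    (K : Type) [Field K] [Fintype K] [CharP K p] (hK : Fintype.card K = p ^ n) :
    twc p K n (fun j => if (j : ℕ) = 0 then 1 else 0) = 1 ∧
    (∀ a b : Fin n → WittVector p K, twc p K n (a + b) = twc p K n a + twc p K n b) ∧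
    (∀ a : Fin n → WittVector p K, twc p K n (-a) = -(twc p K n a)) ∧
    (∀ a b : Fin n → WittVector p K, ∃ c : Fin n → WittVector p K,
      twc p K n a * twc p K n b = twc p K n c) := by
  haveI : NeZero n := ⟨by omega⟩
  have hfrob : wittFrob p K ^ n = 1 := wittFrob_pow_card p K n hK
  refine ⟨?_, ?_, ?_, ?_⟩
  · ext i j
    rw [twc_apply, Matrix.one_apply]
    by_cases hij : i = j
    · subst hij
      simp [sub_self]
    · have h0 : i - j ≠ 0 := sub_ne_zero.mpr hij
      have h0' : ((i - j : Fin n) : ℕ) ≠ 0 := by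
        have := Fin.val_ne_of_ne h0; rwa [Fin.val_zero] at this
      simp [h0', hij]
  · intro a b
    ext i j : 1
    simp only [twc, Matrix.of_apply, Pi.add_apply, map_add, Matrix.add_apply]
    split_ifs <;> ring1
  · intro a
    ext i j : 1
    simp only [twc, Matrix.of_apply, Pi.neg_apply, map_neg, Matrix.neg_apply]
    split_ifs <;> ring1
  · intro a b
    set σ := wittFrob p K with hσ
    refine ⟨fun t => ∑ m : Fin n,
      (if (m : ℕ) ≤ (t : ℕ) then 1 else (p : WittVector p K)) *
        (a m * (σ ^ (m : ℕ)) (b (t - m))), ?_⟩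
    ext i j : 1
    rw [Matrix.mul_apply, twc_apply, map_sum, Finset.mul_sum]
    have hre : ∀ g : Fin n → WittVector p K,
        ∑ m : Fin n, g m = ∑ k : Fin n, g (i - k) := fun g => by
      rw [← Equiv.sum_comp (Equiv.subLeft i) g]
      rfl
    conv_rhs => rw [hre]
    refine Finset.sum_congr rfl fun k _ => ?_
    rw [twc_apply, twc_apply]
    have hidx : i - j - (i - k) = k - j := by abel
    rw [hidx]
    rw [map_mul, map_mul, frob_comp p K n hfrob i k (b (k - j))]
    have hif : (σ⁻¹ ^ (i : ℕ))
        (if (((i - k) : Fin n) : ℕ) ≤ (((i - j) : Fin n) : ℕ) then 1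
          else (p : WittVector p K))
        = (if (((i - k) : Fin n) : ℕ) ≤ (((i - j) : Fin n) : ℕ) then 1
          else (p : WittVector p K)) := by
      split_ifs <;> simp
    rw [hif]
    linear_combination ((σ⁻¹ ^ (i : ℕ)) (a (i - k)) * (σ⁻¹ ^ (k : ℕ)) (b (k - j))) *
      coeff_id p K n i j k
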